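/- Let q = ∃u(q(u)) be a self-join-free Boolean conjunctive query with an acyclic attack graph, (F_1,...,F_n) a topological sort of its attack graph, and db a database instance. Then (i) every superfrugal repair of db is n-minimal, and (ii) every n-minimal repair of db is superfrugal. -/

import Mathlib

open scoped Classical

/-! ## Variables, constants, relation names -/

abbrev Var : Type := ℕ
abbrev RelName : Type := ℕ

/-- A term: a variable or a constant (a non-negative rational). -/
inductive Trm : Type where
  | var : Var → Trm
  | const : ℚ≥0 → Trm
deriving DecidableEq

/-- An atom `R(x̲, y)`: relation name, primary-key arguments, remaining arguments. -/
structure DBAtom : Type where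
  rel : RelName
  keyArgs : List Trm
  nonkeyArgs : List Trm
deriving DecidableEq, Inhabited

/-- A fact: an atom without variables. -/
structure DBFact : Type where
  rel : RelName
  keyArgs : List ℚ≥0
  nonkeyArgs : List ℚ≥0
deriving DecidableEq

def Trm.var? : Trm → Option Var
  | .var v => some v
  | .const _ => none

def Trm.const? : Trm → Option ℚ≥0
  | .var _ => none
  | .const c => some c

def DBAtom.keyVars (F : DBAtom) : Finset Var := (F.keyArgs.filterMap Trm.var?).toFinset

def DBAtom.allVars (F : DBAtom) : Finset Var :=
  ((F.keyArgs ++ F.nonkeyArgs).filterMap Trm.var?).toFinset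

def DBAtom.notkeyVars (F : DBAtom) : Finset Var := F.allVars \ F.keyVars

def qVars (q : List DBAtom) : Finset Var := q.foldr (fun F s => F.allVars ∪ s) ∅

/-- Self-join-free: pairwise distinct relation names. -/
def SelfJoinFree (q : List DBAtom) : Prop := (q.map DBAtom.rel).Nodup

def KeyEqual (f g : DBFact) : Prop := f.rel = g.rel ∧ f.keyArgs = g.keyArgs

def DBConsistent (s : Finset DBFact) : Prop :=
  ∀ f ∈ s, ∀ g ∈ s, KeyEqual f g → f = g

/-- A repair: an inclusion-maximal consistent subset. -/
def IsRepair (db r : Finset DBFact) : Prop :=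
  r ⊆ db ∧ DBConsistent r ∧
    ∀ s : Finset DBFact, r ⊆ s → s ⊆ db → DBConsistent s → s = r

/-! ## Valuations (partial maps from variables to constants) -/

abbrev Assignment : Type := Var → Option ℚ≥0

def Assignment.Dom (θ : Assignment) : Set Var := {v | θ v ≠ none}

def Assignment.ExtendsA (μ θ : Assignment) : Prop :=
  ∀ (v : Var) (c : ℚ≥0), θ v = some c → μ v = some c

noncomputable def Assignment.restrict (θ : Assignment) (S : Set Var) : Assignment :=
  fun v => if v ∈ S then θ v else none

def emptyAssignment : Assignment := fun _ => none

/-- Combination of two valuations (the first takes precedence). -/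
def Assignment.comb (θ μ : Assignment) : Assignment :=
  fun v => (θ v).orElse (fun _ => μ v)

def applyTrm (θ : Assignment) : Trm → Trm
  | .var v => (θ v).elim (Trm.var v) Trm.const
  | .const c => .const c

def applyAtom (θ : Assignment) (F : DBAtom) : DBAtom :=
  ⟨F.rel, F.keyArgs.map (applyTrm θ), F.nonkeyArgs.map (applyTrm θ)⟩

def applyQ (θ : Assignment) (q : List DBAtom) : List DBAtom := q.map (applyAtom θ)

def DBAtom.toFact? (F : DBAtom) : Option DBFact := do
  let ks ← F.keyArgs.mapM Trm.const?
  let ns ← F.nonkeyArgs.mapM Trm.const?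
  pure (DBFact.mk F.rel ks ns)

def AtomIn (s : Finset DBFact) (F : DBAtom) : Prop := ∃ f ∈ s, F.toFact? = some f

/-- `(s, θ) ⊨ q`: θ extends to a valuation over dom(θ) ∪ vars(q) mapping all atoms of q into s. -/
def Entails (s : Finset DBFact) (θ : Assignment) (q : List DBAtom) : Prop :=
  ∃ μ : Assignment, μ.Dom = θ.Dom ∪ ↑(qVars q) ∧ μ.ExtendsA θ ∧
    ∀ F ∈ q, AtomIn s (applyAtom μ F)

/-! ## Functional dependencies -/

def FDSatT (N : Set (Var → ℚ≥0)) (X Y : Finset Var) : Prop :=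
  ∀ t₁ ∈ N, ∀ t₂ ∈ N, (∀ x ∈ X, t₁ x = t₂ x) → ∀ y ∈ Y, t₁ y = t₂ y

/-- Standard logical implication of functional dependencies. -/
def FDImp (fds : Set (Finset Var × Finset Var)) (X Y : Finset Var) : Prop :=
  ∀ N : Set (Var → ℚ≥0), (∀ fd ∈ fds, FDSatT N fd.1 fd.2) → FDSatT N X Y

def FDSet (q : List DBAtom) : Set (Finset Var × Finset Var) :=
  {p | ∃ F ∈ q, p = (F.keyVars, F.allVars)}

def keycl (F : DBAtom) (q : List DBAtom) : Set Var :=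
  {x | x ∈ qVars q ∧ FDImp (FDSet (q.erase F)) F.keyVars {x}}

/-! ## Attacks and the attack graph -/

def AdjIn (q : List DBAtom) (a b : Var) : Prop :=
  ∃ G ∈ q, a ∈ G.allVars ∧ b ∈ G.allVars

/-- Atom F attacks variable x in q. -/
def AttacksVar (q : List DBAtom) (F : DBAtom) (x : Var) : Prop :=
  ∃ l : List Var, (∀ v ∈ l, v ∉ keycl F q) ∧
    (∃ h, l.head? = some h ∧ h ∈ F.notkeyVars) ∧
    l.getLast? = some x ∧ l.Chain' (AdjIn q)

def AttacksAtom (q : List DBAtom) (F G : DBAtom) : Prop :=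
  ∃ x ∈ G.allVars, AttacksVar q F x

def Unattacked (q : List DBAtom) (v : Var) : Prop := ∀ F ∈ q, ¬ AttacksVar q F v

/-- The list order of q is a topological sort of its (hence acyclic) attack graph. -/
def IsTopoSort (q : List DBAtom) : Prop :=
  ∀ i j : Fin q.length, q.get i ≠ q.get j →
    AttacksAtom q (q.get i) (q.get j) → (i : ℕ) < (j : ℕ)

/-! ## Embeddings and ∀embeddings (relative to the list order as topological sort) -/

def uVars (q : List DBAtom) (ℓ : ℕ) : Finset Var := qVars (q.take ℓ)

def headKey : List DBAtom → Finset Var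
  | [] => ∅
  | F :: _ => F.keyVars

/-- ℓ-embedding of q in db. -/
def IsLEmb (q : List DBAtom) (db : Finset DBFact) (ℓ : ℕ) (θ : Assignment) : Prop :=
  θ.Dom = ↑(uVars q ℓ) ∧ Entails db θ q

/-- ℓ-∀embedding of q in db. -/
def IsForallEmb (q : List DBAtom) (db : Finset DBFact) : ℕ → Assignment → Prop
  | 0, θ => IsLEmb q db 0 θ ∧ ∀ r, IsRepair db r → Entails r emptyAssignment q
  | (ℓ + 1), θ =>
      IsLEmb q db (ℓ + 1) θ ∧
      (∀ r, IsRepair db r →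
        Entails r (θ.restrict (↑(uVars q ℓ) ∪ ↑(headKey (q.drop ℓ)))) (q.drop ℓ)) ∧
      IsForallEmb q db ℓ (θ.restrict ↑(uVars q ℓ))

/-- An embedding of q in s: a valuation over vars(q) mapping all atoms of q into s. -/
def IsEmbedding (q : List DBAtom) (s : Finset DBFact) (θ : Assignment) : Prop :=
  θ.Dom = ↑(qVars q) ∧ ∀ F ∈ q, AtomIn s (applyAtom θ F)

/-- Superfrugal repair: every embedding of q in r is a ∀embedding of q in db. -/
def Superfrugal (q : List DBAtom) (db r : Finset DBFact) : Prop :=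
  IsRepair db r ∧ ∀ θ, IsEmbedding q r θ → IsForallEmb q db q.length θ

/-! ## FD satisfaction by sets of valuations; maximal consistent subsets (MCS) -/

def AgreeOn (θ₁ θ₂ : Assignment) (X : Finset Var) : Prop := ∀ x ∈ X, θ₁ x = θ₂ x

def SatFD (N : Set Assignment) (X Y : Finset Var) : Prop :=
  ∀ θ₁ ∈ N, ∀ θ₂ ∈ N, AgreeOn θ₁ θ₂ X → AgreeOn θ₁ θ₂ Y

def SatFDs (N : Set Assignment) (q : List DBAtom) : Prop :=
  ∀ fd ∈ FDSet q, SatFD N fd.1 fd.2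

/-- Maximal consistent subset of a set M of embeddings. -/
def IsMCS (q : List DBAtom) (M N : Set Assignment) : Prop :=
  N ⊆ M ∧ SatFDs N q ∧ ∀ N', N ⊆ N' → N' ⊆ M → SatFDs N' q → N' = N

/-! ## Aggregate operators -/

structure AggOp : Type where
  app : Multiset ℚ≥0 → ℚ
  nonneg : ∀ X : Multiset ℚ≥0, X ≠ 0 → 0 ≤ app X

noncomputable def AggOp.appNN (A : AggOp) (X : Multiset ℚ≥0) : ℚ≥0 := (A.app X).toNNRat

def AggOp.Assoc (A : AggOp) : Prop :=
  ∀ X Y : Multiset ℚ≥0, X ≠ 0 → A.app (X + Y) = A.app (A.appNN X ::ₘ Y)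

def AggOp.Mono (A : AggOp) : Prop :=
  ∀ x x' : List ℚ≥0, x ≠ [] → List.Forall₂ (· ≤ ·) x x' →
    ∀ Y : Multiset ℚ≥0, A.app ↑x ≤ A.app (↑x' + Y)

def evalTrm (θ : Assignment) : Trm → ℚ≥0
  | .var v => (θ v).getD 0
  | .const c => c

/-- The multiset of r-values over a (finite) set of valuations. -/
noncomputable def valsOf (N : Set Assignment) (r : Trm) : Multiset ℚ≥0 :=
  if h : N.Finite then h.toFinset.val.map (fun θ => evalTrm θ r) else 0

/-- Primitive numerical term: a (numerical) variable of the query, or a constant. -/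
def PrimTerm (q : List DBAtom) (r : Trm) : Prop :=
  (∃ v, r = Trm.var v ∧ v ∈ qVars q) ∨ (∃ c, r = Trm.const c)

/-! ## Branches and ∀key-embeddings -/

/-- γ is a branch of the ℓ-∀embedding θ. -/
def IsBranch (q : List DBAtom) (db : Finset DBFact) (ℓ : ℕ) (θ γ : Assignment) : Prop :=
  γ.ExtendsA θ ∧
  (∀ v ∈ γ.Dom \ θ.Dom, Unattacked (applyQ θ (q.drop ℓ)) v) ∧
  (∃ μ, IsForallEmb q db q.length μ ∧ μ.ExtendsA γ)

/-- γ is an (ℓ+1)-∀key-embedding: a branch of θ with domain dom(θ) ∪ key(F_{ℓ+1}). -/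
def IsKeyEmb (q : List DBAtom) (db : Finset DBFact) (ℓ : ℕ) (θ γ : Assignment) : Prop :=
  IsBranch q db ℓ θ γ ∧ γ.Dom = θ.Dom ∪ ↑(headKey (q.drop ℓ))

/-- M(θ): all ∀embeddings of q in db extending θ. -/
def Mset (q : List DBAtom) (db : Finset DBFact) (θ : Assignment) : Set Assignment :=
  {μ | IsForallEmb q db q.length μ ∧ μ.ExtendsA θ}

/-! ## Weakly connected components of the attack graph -/

def UndirectedEdge (p : List DBAtom) (F G : DBAtom) : Prop :=
  F ∈ p ∧ G ∈ p ∧ (AttacksAtom p F G ∨ AttacksAtom p G F)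

/-- S is a maximal weakly connected component of the attack graph of p. -/
def IsWCC (p : List DBAtom) (S : Set DBAtom) : Prop :=
  ∃ F₀ ∈ p, S = {G | Relation.ReflTransGen (UndirectedEdge p) F₀ G}

/-! ## rifi, sequential proofs, n-minimality -/

/-- rifi(q, s, V): valuations over V extending to a valuation over vars(q) mapping q into s. -/
def rifi (q : List DBAtom) (s : Finset DBFact) (V : Finset Var) : Set Assignment :=
  {θ | θ.Dom = ↑V ∧ ∃ μ : Assignment, μ.Dom = ↑(qVars q) ∧ μ.ExtendsA θ ∧
      ∀ F ∈ q, AtomIn s (applyAtom μ F)}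

/-- A sequential proof of FD(p) ⊨ Z → w. -/
def IsSeqProof (p : List DBAtom) (Z : Finset Var) (w : Var) (l : List DBAtom) : Prop :=
  (∀ F ∈ l, F ∈ p) ∧
  (∀ i : Fin l.length, (l.get i).keyVars ⊆ Z ∪ qVars (l.take i.1)) ∧
  w ∈ Z ∪ qVars l

/-- n-minimal repair (with X = vars(q)). -/
def NMinimal (q : List DBAtom) (db r : Finset DBFact) : Prop :=
  IsRepair db r ∧
  ¬ ∃ s : Finset DBFact, IsRepair db s ∧
      (∀ θ, IsEmbedding q s θ → IsEmbedding q r θ) ∧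
      (∃ μ, IsEmbedding q r μ ∧ ¬ IsEmbedding q s μ)

/-! ## Descending chains for aggregate operators -/

def DescChain {α β : Type*} [LT β] (F : Multiset α → β) (s t : α) : Prop :=
  ∀ i : ℕ, F (s ::ₘ Multiset.replicate (i + 1) t) < F (s ::ₘ Multiset.replicate i t)

def BoundedBy {α β : Type*} [LT β] (F : Multiset α → β) (s t : α) (m : ℕ → α) : Prop :=
  ∀ i j : ℕ, 1 ≤ j → ∀ k' k : ℕ, k' ≤ k → k ≤ i →
    F (s ::ₘ Multiset.replicate k' t) <
      F (Multiset.replicate j (m i) + (s ::ₘ Multiset.replicate k t))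

def HasBoundedDescChain {α β : Type*} [LT β] (F : Multiset α → β) : Prop :=
  ∃ s t, DescChain F s t ∧ ∃ m : ℕ → α, BoundedBy F s t m

section AuxBasic

namespace SFAux

lemma keyEqual_refl (f : DBFact) : KeyEqual f f := ⟨rfl, rfl⟩

lemma keyEqual_symm {f g : DBFact} (h : KeyEqual f g) : KeyEqual g f := ⟨h.1.symm, h.2.symm⟩

lemma keyEqual_trans {f g k : DBFact} (h1 : KeyEqual f g) (h2 : KeyEqual g k) : KeyEqual f k :=
  ⟨h1.1.trans h2.1, h1.2.trans h2.2⟩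

lemma var?_eq_some {a : Trm} {v : Var} : a.var? = some v ↔ a = Trm.var v := by
  cases a <;> simp [Trm.var?]

lemma mem_allVars_iff {F : DBAtom} {v : Var} :
    v ∈ F.allVars ↔ Trm.var v ∈ F.keyArgs ++ F.nonkeyArgs := by
  simp only [DBAtom.allVars, List.mem_toFinset, List.mem_filterMap, var?_eq_some]
  constructor
  · rintro ⟨a, ha, rfl⟩; exact ha
  · intro h; exact ⟨_, h, rfl⟩

lemma mem_keyVars_iff {F : DBAtom} {v : Var} :
    v ∈ F.keyVars ↔ Trm.var v ∈ F.keyArgs := by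
  simp only [DBAtom.keyVars, List.mem_toFinset, List.mem_filterMap, var?_eq_some]
  constructor
  · rintro ⟨a, ha, rfl⟩; exact ha
  · intro h; exact ⟨_, h, rfl⟩

lemma keyVars_subset_allVars (F : DBAtom) : F.keyVars ⊆ F.allVars := by
  intro v hv
  rw [mem_allVars_iff, List.mem_append]
  exact Or.inl (mem_keyVars_iff.mp hv)

/-- The ground fact obtained by evaluating all terms of an atom. -/
def groundFact (σ : Assignment) (F : DBAtom) : DBFact :=
  ⟨F.rel, F.keyArgs.map (evalTrm σ), F.nonkeyArgs.map (evalTrm σ)⟩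

lemma const?_applyTrm {σ : Assignment} {a : Trm} (h : ∀ v, a = Trm.var v → (σ v).isSome) :
    (applyTrm σ a).const? = some (evalTrm σ a) := by
  cases a with
  | const c => rfl
  | var v =>
      obtain ⟨c, hc⟩ := Option.isSome_iff_exists.mp (h v rfl)
      simp [applyTrm, hc, evalTrm, Trm.const?]

lemma mapM_const?_map {σ : Assignment} (l : List Trm)
    (h : ∀ a ∈ l, (applyTrm σ a).const? = some (evalTrm σ a)) :
    (l.map (applyTrm σ)).mapM Trm.const? = some (l.map (evalTrm σ)) := by
  induction l with
  | nil => rfl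
  | cons a l ih =>
      simp only [List.map_cons, List.mapM_cons, h a (by simp),
        ih (fun b hb => h b (by simp [hb])), Option.bind_eq_bind, Option.bind_some]
      rfl

lemma toFact?_applyAtom {σ : Assignment} {F : DBAtom}
    (h : ∀ v ∈ F.allVars, (σ v).isSome) :
    (applyAtom σ F).toFact? = some (groundFact σ F) := by
  have hkey : ∀ a ∈ F.keyArgs, (applyTrm σ a).const? = some (evalTrm σ a) := by
    intro a ha
    refine const?_applyTrm (fun v hv => h v ?_)
    rw [mem_allVars_iff, List.mem_append]; exact Or.inl (hv ▸ ha)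
  have hnon : ∀ a ∈ F.nonkeyArgs, (applyTrm σ a).const? = some (evalTrm σ a) := by
    intro a ha
    refine const?_applyTrm (fun v hv => h v ?_)
    rw [mem_allVars_iff, List.mem_append]; exact Or.inr (hv ▸ ha)
  unfold DBAtom.toFact? applyAtom
  simp only [mapM_const?_map _ hkey, mapM_const?_map _ hnon, Option.bind_eq_bind,
    Option.bind_some]
  rfl

lemma atomIn_iff {s : Finset DBFact} {σ : Assignment} {F : DBAtom}
    (h : ∀ v ∈ F.allVars, (σ v).isSome) :
    AtomIn s (applyAtom σ F) ↔ groundFact σ F ∈ s := by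
  unfold AtomIn
  rw [toFact?_applyAtom h]
  constructor
  · rintro ⟨f, hf, he⟩
    obtain rfl : groundFact σ F = f := by injection he
    exact hf
  · intro hf; exact ⟨_, hf, rfl⟩

lemma list_map_eq_imp {α β : Type*} {f g : α → β} :
    ∀ {l : List α}, l.map f = l.map g → ∀ a ∈ l, f a = g a := by
  intro l
  induction l with
  | nil => intro _ a ha; cases ha
  | cons x l ih =>
      intro h a ha
      simp only [List.map_cons, List.cons.injEq] at h
      rcases List.mem_cons.mp ha with rfl | ha'
      · exact h.1
      · exact ih h.2 a ha'

lemma groundFact_congr {σ σ' : Assignment} {F : DBAtom}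
    (h : ∀ v ∈ F.allVars, (σ v).getD 0 = (σ' v).getD 0) :
    groundFact σ F = groundFact σ' F := by
  have harg : ∀ a ∈ F.keyArgs ++ F.nonkeyArgs, evalTrm σ a = evalTrm σ' a := by
    intro a ha
    cases a with
    | const c => rfl
    | var v => exact h v (mem_allVars_iff.mpr ha)
  unfold groundFact
  have h1 : F.keyArgs.map (evalTrm σ) = F.keyArgs.map (evalTrm σ') :=
    List.map_congr_left (fun a ha => harg a (List.mem_append.mpr (Or.inl ha)))
  have h2 : F.nonkeyArgs.map (evalTrm σ) = F.nonkeyArgs.map (evalTrm σ') :=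
    List.map_congr_left (fun a ha => harg a (List.mem_append.mpr (Or.inr ha)))
  rw [h1, h2]

lemma groundFact_eq_imp {σ σ' : Assignment} {F : DBAtom}
    (h : groundFact σ F = groundFact σ' F) :
    ∀ v ∈ F.allVars, (σ v).getD 0 = (σ' v).getD 0 := by
  intro v hv
  have h2 := congrArg DBFact.keyArgs h
  have h3 := congrArg DBFact.nonkeyArgs h
  simp only [groundFact] at h2 h3
  rcases List.mem_append.mp (mem_allVars_iff.mp hv) with hk | hn
  · exact list_map_eq_imp h2 _ hk
  · exact list_map_eq_imp h3 _ hn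

lemma keyEqual_groundFact {σ σ' : Assignment} {F : DBAtom}
    (h : ∀ v ∈ F.keyVars, (σ v).getD 0 = (σ' v).getD 0) :
    KeyEqual (groundFact σ F) (groundFact σ' F) := by
  refine ⟨rfl, ?_⟩
  refine List.map_congr_left (fun a ha => ?_)
  cases a with
  | const c => rfl
  | var v => exact h v (mem_keyVars_iff.mpr ha)

lemma keyVals_of_keyEqual {σ σ' : Assignment} {F : DBAtom}
    (h : KeyEqual (groundFact σ F) (groundFact σ' F)) :
    ∀ v ∈ F.keyVars, (σ v).getD 0 = (σ' v).getD 0 := by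
  intro v hv
  exact list_map_eq_imp h.2 _ (mem_keyVars_iff.mp hv)

end SFAux

end AuxBasic

section AuxLists

namespace SFAux

lemma qVars_nil : qVars [] = ∅ := rfl

lemma qVars_cons (F : DBAtom) (q : List DBAtom) : qVars (F :: q) = F.allVars ∪ qVars q := rfl

lemma qVars_append (l₁ l₂ : List DBAtom) : qVars (l₁ ++ l₂) = qVars l₁ ∪ qVars l₂ := by
  induction l₁ with
  | nil => simp [qVars_nil, qVars_cons]
  | cons F l ih => simp [qVars_cons, ih, Finset.union_assoc]

lemma mem_qVars {v : Var} {q : List DBAtom} : v ∈ qVars q ↔ ∃ F ∈ q, v ∈ F.allVars := by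
  induction q with
  | nil => simp [qVars_nil]
  | cons F l ih => simp [qVars_cons, ih]

lemma allVars_subset_qVars {F : DBAtom} {q : List DBAtom} (h : F ∈ q) :
    F.allVars ⊆ qVars q := fun v hv => mem_qVars.mpr ⟨F, h, hv⟩

lemma uVars_zero (q : List DBAtom) : uVars q 0 = ∅ := rfl

lemma uVars_subset_qVars (q : List DBAtom) (k : ℕ) : uVars q k ⊆ qVars q := by
  intro v hv
  rw [uVars] at hv
  obtain ⟨F, hF, hvF⟩ := mem_qVars.mp hv
  exact mem_qVars.mpr ⟨F, List.take_subset _ _ hF, hvF⟩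

lemma uVars_succ {q : List DBAtom} {k : ℕ} (h : k < q.length) :
    uVars q (k + 1) = uVars q k ∪ (q.get ⟨k, h⟩).allVars := by
  unfold uVars
  rw [List.take_succ, List.getElem?_eq_getElem h]
  simp only [Option.toList_some, qVars_append, qVars_cons, qVars_nil, Finset.union_empty,
    List.get_eq_getElem]

lemma uVars_mono {q : List DBAtom} {k k' : ℕ} (h : k ≤ k') : uVars q k ⊆ uVars q k' := by
  intro v hv
  rw [uVars] at hv ⊢
  obtain ⟨F, hF, hvF⟩ := mem_qVars.mp hv
  refine mem_qVars.mpr ⟨F, ?_, hvF⟩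
  have : q.take k = (q.take k').take k := by rw [List.take_take, min_eq_left h]
  rw [this] at hF
  exact List.take_subset _ _ hF

lemma uVars_full {q : List DBAtom} {k : ℕ} (h : q.length ≤ k) : uVars q k = qVars q := by
  unfold uVars
  rw [List.take_of_length_le h]

lemma uVars_union_drop (q : List DBAtom) (k : ℕ) :
    uVars q k ∪ qVars (q.drop k) = qVars q := by
  conv_rhs => rw [← List.take_append_drop k q]
  rw [qVars_append]; rfl

lemma drop_eq_cons {q : List DBAtom} {k : ℕ} (h : k < q.length) :
    q.drop k = q.get ⟨k, h⟩ :: q.drop (k + 1) := by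
  rw [List.drop_eq_getElem_cons h]; rfl

lemma headKey_drop {q : List DBAtom} {k : ℕ} (h : k < q.length) :
    headKey (q.drop k) = (q.get ⟨k, h⟩).keyVars := by
  rw [drop_eq_cons h]; rfl

lemma mem_drop_iff {q : List DBAtom} {k : ℕ} {F : DBAtom} :
    F ∈ q.drop k ↔ ∃ i : Fin q.length, k ≤ (i : ℕ) ∧ q.get i = F := by
  simp only [List.mem_iff_getElem, List.length_drop, List.getElem_drop, List.get_eq_getElem]
  constructor
  · rintro ⟨j, hj, rfl⟩
    exact ⟨⟨k + j, by omega⟩, by simp, rfl⟩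
  · rintro ⟨i, hki, rfl⟩
    exact ⟨(i : ℕ) - k, by omega, by congr 1; omega⟩

lemma get_mem_drop {q : List DBAtom} {k : ℕ} (i : Fin q.length) (h : k ≤ (i : ℕ)) :
    q.get i ∈ q.drop k := mem_drop_iff.mpr ⟨i, h, rfl⟩

end SFAux

end AuxLists

section AuxAssign

namespace SFAux

lemma mem_Dom_iff {θ : Assignment} {v : Var} : v ∈ θ.Dom ↔ (θ v).isSome := by
  unfold Assignment.Dom
  simp [Option.isSome_iff_ne_none]

lemma Dom_restrict (θ : Assignment) (S : Set Var) :
    (θ.restrict S).Dom = S ∩ θ.Dom := by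
  ext v
  by_cases hv : v ∈ S <;>
    simp [Assignment.restrict, Assignment.Dom, hv]

lemma restrict_apply_of_mem {θ : Assignment} {S : Set Var} {v : Var} (h : v ∈ S) :
    θ.restrict S v = θ v := by simp [Assignment.restrict, h]

lemma restrict_apply_of_not_mem {θ : Assignment} {S : Set Var} {v : Var} (h : v ∉ S) :
    θ.restrict S v = none := by simp [Assignment.restrict, h]

lemma restrict_restrict (θ : Assignment) (S S' : Set Var) :
    (θ.restrict S).restrict S' = θ.restrict (S' ∩ S) := by
  funext v
  by_cases h1 : v ∈ S' <;> by_cases h2 : v ∈ S <;>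
    simp [Assignment.restrict, h1, h2]

lemma restrict_eq_self {θ : Assignment} {S : Set Var} (h : θ.Dom ⊆ S) :
    θ.restrict S = θ := by
  funext v
  by_cases hv : v ∈ S
  · simp [Assignment.restrict, hv]
  · simp only [Assignment.restrict, hv, if_false]
    by_contra hne
    exact hv (h (by simp [Assignment.Dom]; exact fun hc => hne hc.symm))

lemma extendsA_restrict (θ : Assignment) (S : Set Var) : θ.ExtendsA (θ.restrict S) := by
  intro v c hc
  by_cases hv : v ∈ S
  · rw [restrict_apply_of_mem hv] at hc; exact hc
  · rw [restrict_apply_of_not_mem hv] at hc; cases hc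

lemma isSome_of_Dom_eq {θ : Assignment} {S : Finset Var} (h : θ.Dom = ↑S) {v : Var}
    (hv : v ∈ S) : (θ v).isSome := by
  have : v ∈ θ.Dom := h ▸ (by exact_mod_cast hv)
  exact mem_Dom_iff.mp this

/-- Self-join-freeness consequences. -/
lemma nodup_of_sjf {q : List DBAtom} (h : SelfJoinFree q) : q.Nodup :=
  List.Nodup.of_map _ h

lemma rel_get_inj {q : List DBAtom} (h : SelfJoinFree q) {i j : Fin q.length}
    (he : (q.get i).rel = (q.get j).rel) : i = j := by
  unfold SelfJoinFree at h
  have hi : (q.map DBAtom.rel).get ⟨i, by simp⟩ = (q.get i).rel := by simp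
  have hj : (q.map DBAtom.rel).get ⟨j, by simp⟩ = (q.get j).rel := by simp
  have := List.Nodup.get_inj_iff h (i := ⟨i, by simp⟩) (j := ⟨j, by simp⟩)
  have heq : ((⟨(i : ℕ), by simp⟩ : Fin (q.map DBAtom.rel).length)) =
      ((⟨(j : ℕ), by simp⟩ : Fin (q.map DBAtom.rel).length)) := by
    apply this.mp
    rw [hi, hj]; exact he
  have := congrArg Fin.val heq
  simp only at this
  exact Fin.ext this

lemma rel_mem_inj {q : List DBAtom} (h : SelfJoinFree q) {F G : DBAtom}
    (hF : F ∈ q) (hG : G ∈ q) (he : F.rel = G.rel) : F = G := by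
  obtain ⟨i, hi⟩ := List.get_of_mem hF
  obtain ⟨j, hj⟩ := List.get_of_mem hG
  have := rel_get_inj h (i := i) (j := j) (by rw [hi, hj]; exact he)
  rw [← hi, ← hj, this]

end SFAux

end AuxAssign

section AuxRepair

namespace SFAux

lemma repair_eq_of_subset {db t r : Finset DBFact} (ht : IsRepair db t) (hr : IsRepair db r)
    (h : t ⊆ r) : t = r :=
  (ht.2.2 r h hr.1 hr.2.1).symm

lemma exists_keyEqual_rep {db t : Finset DBFact} (ht : IsRepair db t) {g : DBFact}
    (hg : g ∈ db) : ∃ c ∈ t, KeyEqual c g := by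
  by_contra hno
  push_neg at hno
  have hcons : DBConsistent (insert g t) := by
    intro a ha b hb hab
    rcases Finset.mem_insert.mp ha with rfl | hat
    · rcases Finset.mem_insert.mp hb with rfl | hbt
      · rfl
      · exact absurd (keyEqual_symm hab) (hno b hbt)
    · rcases Finset.mem_insert.mp hb with rfl | hbt
      · exact absurd hab (hno a hat)
      · exact ht.2.1 a hat b hbt hab
  have heq := ht.2.2 (insert g t) (Finset.subset_insert _ _)
    (Finset.insert_subset hg ht.1) hcons
  have : g ∈ t := heq ▸ Finset.mem_insert_self g t
  exact hno g this (keyEqual_refl g)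

lemma rep_unique {t : Finset DBFact} (hcons : DBConsistent t) {c c' g : DBFact}
    (hc : c ∈ t) (hc' : c' ∈ t) (h1 : KeyEqual c g) (h2 : KeyEqual c' g) : c = c' :=
  hcons c hc c' hc' (keyEqual_trans h1 (keyEqual_symm h2))

lemma flip_isRepair {db t : Finset DBFact} (ht : IsRepair db t) {h f : DBFact}
    (hh : h ∈ t) (hf : f ∈ db) (hkeq : KeyEqual f h) :
    IsRepair db (insert f (t.erase h)) := by
  by_cases hfh : f = h
  · subst hfh
    rw [Finset.insert_erase hh]
    exact ht
  constructor
  · exact Finset.insert_subset hf ((Finset.erase_subset _ _).trans ht.1)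
  constructor
  · -- consistency
    intro a ha b hb hab
    rcases Finset.mem_insert.mp ha with rfl | hae
    · rcases Finset.mem_insert.mp hb with rfl | hbe
      · rfl
      · exfalso
        have hbt := Finset.mem_of_mem_erase hbe
        have hbh := Finset.ne_of_mem_erase hbe
        have : h = b := ht.2.1 h hh b hbt (keyEqual_trans (keyEqual_symm hkeq) hab)
        exact hbh this.symm
    · rcases Finset.mem_insert.mp hb with rfl | hbe
      · exfalso
        have hat := Finset.mem_of_mem_erase hae
        have hah := Finset.ne_of_mem_erase hae
        have : a = h := ht.2.1 a hat h hh (keyEqual_trans hab hkeq)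
        exact hah this
      · exact ht.2.1 a (Finset.mem_of_mem_erase hae) b (Finset.mem_of_mem_erase hbe) hab
  · -- maximality
    intro s hs hsdb hscons
    refine Finset.Subset.antisymm ?_ hs
    intro g hg
    by_contra hgno
    have hgdb : g ∈ db := hsdb hg
    have hgf : g ≠ f := by rintro rfl; exact hgno (Finset.mem_insert_self g _)
    by_cases hkeq2 : KeyEqual f g
    · have : f = g := hscons f (hs (Finset.mem_insert_self f _)) g hg hkeq2
      exact hgf this.symm
    by_cases hgt : g ∈ t
    · by_cases hgh : g = h
      · exact hkeq2 (hgh ▸ hkeq)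
      · exact hgno (Finset.mem_insert.mpr (Or.inr (Finset.mem_erase.mpr ⟨hgh, hgt⟩)))
    · obtain ⟨c, hct, hckeq⟩ := exists_keyEqual_rep ht hgdb
      by_cases hch : c = h
      · exact hkeq2 (keyEqual_trans hkeq (hch ▸ hckeq))
      · have hcmem : c ∈ insert f (t.erase h) :=
          Finset.mem_insert.mpr (Or.inr (Finset.mem_erase.mpr ⟨hch, hct⟩))
        have : c = g := hscons c (hs hcmem) g hg hckeq
        exact hgno (this ▸ hcmem)

lemma flip_sdiff {t r : Finset DBFact} {h f : DBFact} (hfr : f ∈ r) :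
    (insert f (t.erase h)) \ r = (t \ r).erase h := by
  ext x
  simp only [Finset.mem_sdiff, Finset.mem_insert, Finset.mem_erase]
  constructor
  · rintro ⟨rfl | ⟨hxh, hxt⟩, hxr⟩
    · exact absurd hfr hxr
    · exact ⟨hxh, hxt, hxr⟩
  · rintro ⟨hxh, hxt, hxr⟩
    exact ⟨Or.inr ⟨hxh, hxt⟩, hxr⟩

end SFAux

end AuxRepair

section AuxEntails

namespace SFAux

lemma isSome_of_mem_Dom {κ : Assignment} {D : Set Var} (hD : κ.Dom = D) {v : Var}
    (hv : v ∈ D) : (κ v).isSome := mem_Dom_iff.mp (hD ▸ hv)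

lemma entails_iff {s : Finset DBFact} {θ : Assignment} {p : List DBAtom} :
    Entails s θ p ↔ ∃ κ : Assignment, κ.Dom = θ.Dom ∪ ↑(qVars p) ∧ κ.ExtendsA θ ∧
      ∀ F ∈ p, groundFact κ F ∈ s := by
  unfold Entails
  constructor
  · rintro ⟨κ, hDom, hExt, hF⟩
    refine ⟨κ, hDom, hExt, fun F hFp => ?_⟩
    have hsome : ∀ v ∈ F.allVars, (κ v).isSome := fun v hv =>
      isSome_of_mem_Dom hDom (Or.inr (by exact_mod_cast allVars_subset_qVars hFp hv))
    exact (atomIn_iff hsome).mp (hF F hFp)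
  · rintro ⟨κ, hDom, hExt, hF⟩
    refine ⟨κ, hDom, hExt, fun F hFp => ?_⟩
    have hsome : ∀ v ∈ F.allVars, (κ v).isSome := fun v hv =>
      isSome_of_mem_Dom hDom (Or.inr (by exact_mod_cast allVars_subset_qVars hFp hv))
    exact (atomIn_iff hsome).mpr (hF F hFp)

lemma isEmbedding_iff {q : List DBAtom} {s : Finset DBFact} {θ : Assignment} :
    IsEmbedding q s θ ↔ θ.Dom = ↑(qVars q) ∧ ∀ F ∈ q, groundFact θ F ∈ s := by
  unfold IsEmbedding
  constructor
  · rintro ⟨hDom, hF⟩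
    refine ⟨hDom, fun F hFq => ?_⟩
    have hsome : ∀ v ∈ F.allVars, (θ v).isSome := fun v hv =>
      isSome_of_mem_Dom hDom (by exact_mod_cast allVars_subset_qVars hFq hv)
    exact (atomIn_iff hsome).mp (hF F hFq)
  · rintro ⟨hDom, hF⟩
    refine ⟨hDom, fun F hFq => ?_⟩
    have hsome : ∀ v ∈ F.allVars, (θ v).isSome := fun v hv =>
      isSome_of_mem_Dom hDom (by exact_mod_cast allVars_subset_qVars hFq hv)
    exact (atomIn_iff hsome).mpr (hF F hFq)

/-- The canonical witness for `Entails s (θ.restrict S) p` obtained by restricting a total-enough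
assignment. -/
lemma entails_of_restrict {s : Finset DBFact} {θ : Assignment} {p : List DBAtom}
    {S : Set Var} (hS : S ⊆ θ.Dom) (hq : ↑(qVars p) ⊆ θ.Dom)
    (hF : ∀ F ∈ p, groundFact θ F ∈ s) :
    Entails s (θ.restrict S) p := by
  rw [entails_iff]
  refine ⟨θ.restrict (S ∪ ↑(qVars p)), ?_, ?_, ?_⟩
  · rw [Dom_restrict, Dom_restrict]
    rw [Set.inter_eq_left.mpr hS, Set.inter_eq_left.mpr (Set.union_subset hS hq)]
  · intro v c hc
    have hvS : v ∈ S := by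
      by_contra hvS
      rw [restrict_apply_of_not_mem hvS] at hc; cases hc
    rw [restrict_apply_of_mem hvS] at hc
    rw [restrict_apply_of_mem (Set.mem_union_left _ hvS)]
    exact hc
  · intro F hFp
    have : groundFact (θ.restrict (S ∪ ↑(qVars p))) F = groundFact θ F := by
      refine groundFact_congr (fun v hv => ?_)
      rw [restrict_apply_of_mem (Set.mem_union_right _ (by
        exact_mod_cast allVars_subset_qVars hFp hv))]
    rw [this]
    exact hF F hFp

end SFAux

end AuxEntails

section AuxAttack

namespace SFAux

lemma keyVars_subset_keycl {q : List DBAtom} {F : DBAtom} (hF : F ∈ q) :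
    ∀ v ∈ F.keyVars, v ∈ keycl F q := by
  intro v hv
  refine ⟨allVars_subset_qVars hF (keyVars_subset_allVars F hv), ?_⟩
  intro N _ t₁ h₁ t₂ h₂ hagree y hy
  rw [Finset.mem_singleton] at hy
  subst hy
  exact hagree _ hv

lemma attacksVar_start {q : List DBAtom} {F : DBAtom} {v : Var}
    (h1 : v ∈ F.notkeyVars) (h2 : v ∉ keycl F q) : AttacksVar q F v := by
  refine ⟨[v], ?_, ⟨v, rfl, h1⟩, rfl, ?_⟩
  · intro w hw; rw [List.mem_singleton] at hw; subst hw; exact h2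
  · exact List.isChain_singleton _

lemma attacksVar_snoc {q : List DBAtom} {F G : DBAtom} {v x : Var}
    (h : AttacksVar q F v) (hG : G ∈ q) (hv : v ∈ G.allVars) (hx : x ∈ G.allVars)
    (hxk : x ∉ keycl F q) : AttacksVar q F x := by
  obtain ⟨l, hmem, ⟨h0, hhead, hh0⟩, hlast, hchain⟩ := h
  have hlne : l ≠ [] := by
    intro hl; rw [hl] at hhead; cases hhead
  refine ⟨l ++ [x], ?_, ⟨h0, ?_, hh0⟩, List.getLast?_concat, ?_⟩
  · intro w hw
    rcases List.mem_append.mp hw with hw | hw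
    · exact hmem w hw
    · rw [List.mem_singleton] at hw; subst hw; exact hxk
  · rw [List.head?_append_of_ne_nil _ hlne]; exact hhead
  · show List.IsChain (AdjIn q) (l ++ [x])
    rw [List.isChain_append]
    refine ⟨hchain, List.isChain_singleton _, ?_⟩
    intro a ha y hy
    rw [hlast, Option.mem_def] at ha
    have hav : v = a := by injection ha
    simp only [List.head?_cons, Option.mem_def, Option.some.injEq] at hy
    subst hy
    exact ⟨G, hG, hav ▸ hv, hx⟩

lemma attacksVar_not_keycl {q : List DBAtom} {F : DBAtom} {v : Var}
    (h : AttacksVar q F v) : v ∉ keycl F q := by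
  obtain ⟨l, hmem, _, hlast, _⟩ := h
  exact hmem v (List.mem_of_getLast? hlast)

lemma chain_last_cases {q : List DBAtom} :
    ∀ (l : List Var) {x h0 : Var}, l.Chain' (AdjIn q) → l.getLast? = some x →
      l.head? = some h0 → x = h0 ∨ ∃ G ∈ q, x ∈ G.allVars := by
  intro l
  induction l with
  | nil => intro x h0 _ hx; cases hx
  | cons a l ih =>
      intro x h0 hchain hlast hhead
      have hh : h0 = a := by
        simp only [List.head?_cons, Option.some.injEq] at hhead; exact hhead.symm
      cases l with
      | nil =>
          left
          simp only [List.getLast?_singleton, Option.some.injEq] at hlast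
          rw [hh, hlast]
      | cons b l' =>
          have hchain' : (b :: l').Chain' (AdjIn q) := hchain.tail
          have hlast' : (b :: l').getLast? = some x := by
            rwa [List.getLast?_cons_cons] at hlast
          rcases ih hchain' hlast' rfl with hxb | hG
          · have hadj : AdjIn q a b := (List.isChain_cons_cons.mp hchain).1
            obtain ⟨G, hGq, _, hbG⟩ := hadj
            exact Or.inr ⟨G, hGq, hxb ▸ hbG⟩
          · exact Or.inr hG

lemma attacksVar_mem_atom {q : List DBAtom} {F : DBAtom} (hFq : F ∈ q) {v : Var}
    (h : AttacksVar q F v) : ∃ G ∈ q, v ∈ G.allVars := by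
  obtain ⟨l, _, ⟨h0, hhead, hh0⟩, hlast, hchain⟩ := h
  rcases chain_last_cases l hchain hlast hhead with rfl | hG
  · exact ⟨F, hFq, (Finset.sdiff_subset) hh0⟩
  · exact hG

end SFAux

end AuxAttack

section AuxFD

namespace SFAux

/-- Lift a total valuation to an `Assignment`. -/
def liftTot (t : Var → ℚ≥0) : Assignment := fun v => some (t v)

lemma groundFact_liftTot (σ : Assignment) (F : DBAtom) :
    groundFact (liftTot (fun v => (σ v).getD 0)) F = groundFact σ F :=
  groundFact_congr (fun _ _ => rfl)

lemma option_eq_of_getD {a b : Option ℚ≥0} (ha : a.isSome) (hb : b.isSome)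
    (h : a.getD 0 = b.getD 0) : a = b := by
  obtain ⟨x, rfl⟩ := Option.isSome_iff_exists.mp ha
  obtain ⟨y, rfl⟩ := Option.isSome_iff_exists.mp hb
  simpa using h

/-- The team argument: two valuations that place all atoms except `q.get j` inside a consistent
repair `t` and agree on the key of `q.get j` agree on all of `keycl (q.get j) q`. -/
lemma fd_forcing {q : List DBAtom} (hsjf : SelfJoinFree q) {t : Finset DBFact}
    (hcons : DBConsistent t) (j : Fin q.length) {κ μ : Assignment}
    (hκ : ∀ i : Fin q.length, i ≠ j → groundFact κ (q.get i) ∈ t)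
    (hμ : ∀ i : Fin q.length, i ≠ j → groundFact μ (q.get i) ∈ t)
    (hkey : ∀ v ∈ (q.get j).keyVars, (κ v).getD 0 = (μ v).getD 0) :
    ∀ x ∈ keycl (q.get j) q, (κ x).getD 0 = (μ x).getD 0 := by
  intro x hx
  obtain ⟨-, himp⟩ := hx
  set N : Set (Var → ℚ≥0) :=
    {tot | ∀ G ∈ q.erase (q.get j), groundFact (liftTot tot) G ∈ t} with hN
  have hNsat : ∀ fd ∈ FDSet (q.erase (q.get j)), FDSatT N fd.1 fd.2 := by
    rintro ⟨X, Y⟩ ⟨G, hG, heq⟩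
    obtain ⟨rfl, rfl⟩ : X = G.keyVars ∧ Y = G.allVars := by
      constructor <;> [exact congrArg Prod.fst heq; exact congrArg Prod.snd heq]
    intro t₁ h₁ t₂ h₂ hagree y hy
    have hfacts1 : groundFact (liftTot t₁) G ∈ t := h₁ G hG
    have hfacts2 : groundFact (liftTot t₂) G ∈ t := h₂ G hG
    have hke : KeyEqual (groundFact (liftTot t₁) G) (groundFact (liftTot t₂) G) :=
      keyEqual_groundFact (fun v hv => hagree v hv)
    have heq2 := hcons _ hfacts1 _ hfacts2 hke
    have := groundFact_eq_imp heq2 y hy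
    simpa [liftTot] using this
  have hsat := himp N hNsat
  have hmemN : ∀ (σ : Assignment), (∀ i : Fin q.length, i ≠ j → groundFact σ (q.get i) ∈ t) →
      (fun v => (σ v).getD 0) ∈ N := by
    intro σ hσ G hG
    have hGq : G ∈ q := List.mem_of_mem_erase hG
    have hGne : G ≠ q.get j := ((nodup_of_sjf hsjf).mem_erase_iff.mp hG).1
    obtain ⟨i, hi⟩ := List.get_of_mem hGq
    have hij : i ≠ j := by rintro rfl; exact hGne hi.symm
    rw [groundFact_liftTot]
    exact hi ▸ hσ i hij
  have h1 := hmemN κ hκ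
  have h2 := hmemN μ hμ
  have := hsat _ h1 _ h2 (fun v hv => hkey v hv) x (Finset.mem_singleton_self x)
  simpa using this

end SFAux

end AuxFD

section Master

namespace SFAux

lemma mem_take_iff {q : List DBAtom} {k : ℕ} {F : DBAtom} :
    F ∈ q.take k ↔ ∃ i : Fin q.length, (i : ℕ) < k ∧ q.get i = F := by
  simp only [List.mem_iff_getElem, List.length_take, List.getElem_take,
    List.get_eq_getElem, lt_min_iff]
  constructor
  · rintro ⟨j, ⟨hjk, hjl⟩, rfl⟩
    exact ⟨⟨j, hjl⟩, hjk, rfl⟩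
  · rintro ⟨i, hik, rfl⟩
    exact ⟨(i : ℕ), ⟨hik, i.2⟩, rfl⟩

lemma master {q : List DBAtom} (hsjf : SelfJoinFree q) (htopo : IsTopoSort q)
    {db r : Finset DBFact} (hrmin : NMinimal q db r) {θ : Assignment}
    (hemb : IsEmbedding q r θ) (k : ℕ) (hk : k < q.length) :
    ∀ t : Finset DBFact, IsRepair db t →
      Entails t (θ.restrict (↑(uVars q k) ∪ ↑((q.get ⟨k, hk⟩).keyVars))) (q.drop k) := by
  have hr : IsRepair db r := hrmin.1
  have hDomθ : θ.Dom = ↑(qVars q) := hemb.1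
  have hθfacts : ∀ F ∈ q, groundFact θ F ∈ r := (isEmbedding_iff.mp hemb).2
  set S : Set Var := ↑(uVars q k) ∪ ↑((q.get ⟨k, hk⟩).keyVars) with hSdef
  have hkmem : q.get ⟨k, hk⟩ ∈ q := by exact List.get_mem q ⟨k, hk⟩
  have hSsub : S ⊆ θ.Dom := by
    rw [hDomθ]
    rintro v (hv | hv)
    · exact_mod_cast uVars_subset_qVars q k (by exact_mod_cast hv)
    · exact_mod_cast allVars_subset_qVars hkmem
        (keyVars_subset_allVars _ (by exact_mod_cast hv))
  have htailsub : (↑(qVars (q.drop k)) : Set Var) ⊆ θ.Dom := by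
    rw [hDomθ]
    intro v hv
    have : v ∈ qVars q := by
      rw [← uVars_union_drop q k]
      exact Finset.mem_union_right _ (by exact_mod_cast hv)
    exact_mod_cast this
  suffices H : ∀ m : ℕ, ∀ t, IsRepair db t → (t \ r).card = m →
      Entails t (θ.restrict S) (q.drop k) by
    intro t ht
    exact H _ t ht rfl
  intro m
  induction m with
  | zero =>
      intro t ht hcard
      have hsub : t ⊆ r := Finset.sdiff_eq_empty_iff_subset.mp (Finset.card_eq_zero.mp hcard)
      have hteq : t = r := repair_eq_of_subset ht hr hsub
      subst hteq
      exact entails_of_restrict hSsub htailsub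
        (fun F hF => hθfacts F (List.drop_subset _ _ hF))
  | succ m ih =>
      intro t ht hcard
      by_contra hnot
      -- Step 1: every fact of t \ r has the relation name of a tail atom.
      have step1 : ∀ h ∈ t \ r, ∃ i : Fin q.length, k ≤ (i : ℕ) ∧ h.rel = (q.get i).rel := by
        intro h hh
        by_contra hno
        push_neg at hno
        obtain ⟨hht, hhr⟩ := Finset.mem_sdiff.mp hh
        obtain ⟨f, hfr, hfkeq⟩ := exists_keyEqual_rep hr (ht.1 hht)
        have ht' : IsRepair db (insert f (t.erase h)) :=
          flip_isRepair ht hht (hr.1 hfr) hfkeq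
        have hcard' : ((insert f (t.erase h)) \ r).card = m := by
          rw [flip_sdiff hfr, Finset.card_erase_of_mem hh, hcard]
          omega
        have hent := ih _ ht' hcard'
        apply hnot
        rw [entails_iff] at hent ⊢
        obtain ⟨κ, hκD, hκE, hκF⟩ := hent
        refine ⟨κ, hκD, hκE, fun F hF => ?_⟩
        have hmem := hκF F hF
        have hne : groundFact κ F ≠ f := by
          intro he
          obtain ⟨i, hik, hFi⟩ := mem_drop_iff.mp hF
          refine hno i hik ?_
          have h1 : f.rel = h.rel := (keyEqual_symm hfkeq).1.symm
          have h2 : (groundFact κ F).rel = F.rel := rfl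
          rw [← h1, ← he, h2, hFi]
        rcases Finset.mem_insert.mp hmem with he | hm
        · exact absurd he hne
        · exact Finset.mem_of_mem_erase hm
      -- Step 1b: the facts of θ on early atoms belong to t.
      have step1b : ∀ i : Fin q.length, (i : ℕ) < k → groundFact θ (q.get i) ∈ t := by
        intro i hik
        have hgr : groundFact θ (q.get i) ∈ r := hθfacts _ (by exact List.get_mem q i)
        obtain ⟨c, hct, hckeq⟩ := exists_keyEqual_rep ht (hr.1 hgr)
        by_cases hcg : c = groundFact θ (q.get i)
        · rwa [← hcg]
        · exfalso
          have hcr : c ∉ r := fun hcr => hcg (hr.2.1 c hcr _ hgr hckeq)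
          obtain ⟨i', hi'k, hrel⟩ := step1 c (Finset.mem_sdiff.mpr ⟨hct, hcr⟩)
          have heq : (q.get i).rel = (q.get i').rel := by
            have h1 : c.rel = (groundFact θ (q.get i)).rel := hckeq.1
            have h2 : (groundFact θ (q.get i)).rel = (q.get i).rel := rfl
            rw [← hrel, h1, h2]
          have := rel_get_inj hsjf heq
          rw [this] at hik
          omega
      -- Step 2: θ itself is not an embedding of q in t.
      have step2 : ¬ ∀ F ∈ q.drop k, groundFact θ F ∈ t :=
        fun hall => hnot (entails_of_restrict hSsub htailsub hall)
      have hθnott : ¬ IsEmbedding q t θ := by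
        intro he
        exact step2 (fun F hF => (isEmbedding_iff.mp he).2 F (List.drop_subset _ _ hF))
      -- Step 3: n-minimality provides a stray embedding of t.
      have hstray : ∃ μ, IsEmbedding q t μ ∧ ¬ IsEmbedding q r μ := by
        by_contra hno
        push_neg at hno
        exact hrmin.2 ⟨t, ht, hno, θ, hemb, hθnott⟩
      obtain ⟨μ, hμt, hμr⟩ := hstray
      have hμD : μ.Dom = ↑(qVars q) := hμt.1
      have hμfacts : ∀ F ∈ q, groundFact μ F ∈ t := (isEmbedding_iff.mp hμt).2
      -- Step 4: locate the stray atom.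
      have hex : ∃ F ∈ q, groundFact μ F ∉ r := by
        by_contra hno
        push_neg at hno
        exact hμr (isEmbedding_iff.mpr ⟨hμD, hno⟩)
      obtain ⟨F₀, hF₀q, hF₀r⟩ := hex
      obtain ⟨j, hjF⟩ := List.get_of_mem hF₀q
      subst hjF
      have hht : groundFact μ (q.get j) ∈ t := hμfacts _ hF₀q
      have hhd : groundFact μ (q.get j) ∈ t \ r := Finset.mem_sdiff.mpr ⟨hht, hF₀r⟩
      have hkj : k ≤ (j : ℕ) := by
        obtain ⟨j', hj'k, hj'rel⟩ := step1 _ hhd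
        have heq : (q.get j).rel = (q.get j').rel := hj'rel
        rw [rel_get_inj hsjf heq]
        exact hj'k
      -- Step 5: flip the stray block back to the r-representative.
      obtain ⟨f₀, hf₀r, hf₀keq⟩ := exists_keyEqual_rep hr (ht.1 hht)
      have ht' : IsRepair db (insert f₀ (t.erase (groundFact μ (q.get j)))) :=
        flip_isRepair ht hht (hr.1 hf₀r) hf₀keq
      have hcard' : ((insert f₀ (t.erase (groundFact μ (q.get j)))) \ r).card = m := by
        rw [flip_sdiff hf₀r, Finset.card_erase_of_mem hhd, hcard]
        omega
      have hent' := ih _ ht' hcard'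
      rw [entails_iff] at hent'
      obtain ⟨κ, hκD, hκE, hκF⟩ := hent'
      -- Case A: the completion avoids f₀ — then it already lives in t.
      by_cases hA : ∀ F ∈ q.drop k, groundFact κ F ≠ f₀
      · apply hnot
        rw [entails_iff]
        refine ⟨κ, hκD, hκE, fun F hF => ?_⟩
        rcases Finset.mem_insert.mp (hκF F hF) with he | hm
        · exact absurd he (hA F hF)
        · exact Finset.mem_of_mem_erase hm
      push_neg at hA
      obtain ⟨Fb, hFb, hFbf⟩ := hA
      have hFbj : Fb = q.get j := by
        refine rel_mem_inj hsjf (List.drop_subset _ _ hFb) hF₀q ?_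
        have h1 : (groundFact κ Fb).rel = Fb.rel := rfl
        have h2 : f₀.rel = (groundFact μ (q.get j)).rel := hf₀keq.1
        have h3 : (groundFact μ (q.get j)).rel = (q.get j).rel := rfl
        rw [← h1, hFbf, h2, h3]
      rw [hFbj] at hFbf
      -- κ places all atoms other than q.get j inside t.
      have hκall : ∀ i : Fin q.length, i ≠ j → groundFact κ (q.get i) ∈ t := by
        intro i hij
        by_cases hik : (i : ℕ) < k
        · have hagree : ∀ v ∈ (q.get i).allVars, (κ v).getD 0 = (θ v).getD 0 := by
            intro v hv
            have hvS : v ∈ S := Or.inl (by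
              exact_mod_cast mem_qVars.mpr ⟨q.get i, mem_take_iff.mpr ⟨i, hik, rfl⟩, hv⟩)
            have hvD : v ∈ θ.Dom := hSsub hvS
            obtain ⟨c, hc⟩ := Option.isSome_iff_exists.mp (mem_Dom_iff.mp hvD)
            have hπ : θ.restrict S v = some c := by rw [restrict_apply_of_mem hvS, hc]
            rw [hκE v c hπ, hc]
          rw [groundFact_congr hagree]
          exact step1b i hik
        · have hmem := hκF (q.get i) (get_mem_drop i (le_of_not_gt hik))
          have hne : groundFact κ (q.get i) ≠ f₀ := by
            intro he
            apply hij
            apply rel_get_inj hsjf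
            have h1 : (groundFact κ (q.get i)).rel = (q.get i).rel := rfl
            have h2 : f₀.rel = (q.get j).rel := hf₀keq.1
            rw [← h1, he, h2]
          rcases Finset.mem_insert.mp hmem with he | hm
          · exact absurd he hne
          · exact Finset.mem_of_mem_erase hm
      have hμall : ∀ i : Fin q.length, i ≠ j → groundFact μ (q.get i) ∈ t :=
        fun i _ => hμfacts _ (by exact List.get_mem q i)
      -- Key agreement between κ and μ on the key of q.get j.
      have hkey : ∀ v ∈ (q.get j).keyVars, (κ v).getD 0 = (μ v).getD 0 := by
        have hkeq : KeyEqual (groundFact κ (q.get j)) (groundFact μ (q.get j)) := by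
          rw [hFbf]; exact hf₀keq
        exact keyVals_of_keyEqual hkeq
      -- FD forcing on keycl.
      have hforce : ∀ x ∈ keycl (q.get j) q, (κ x).getD 0 = (μ x).getD 0 :=
        fd_forcing hsjf ht.2.1 j hκall hμall hkey
      -- The attacked variables.
      set W : Set Var := {v | AttacksVar q (q.get j) v} with hWdef
      have hWkeycl : ∀ v ∈ W, v ∉ keycl (q.get j) q := fun v hv => attacksVar_not_keycl hv
      have hWout : ∀ v ∈ (q.get j).allVars, v ∉ W → v ∈ keycl (q.get j) q := by
        intro v hv hvW
        by_cases hkv : v ∈ (q.get j).keyVars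
        · exact keyVars_subset_keycl hF₀q v hkv
        · by_contra hc
          exact hvW (attacksVar_start (Finset.mem_sdiff.mpr ⟨hv, hkv⟩) hc)
      have hWprop : ∀ G ∈ q, (∃ w ∈ G.allVars, w ∈ W) →
          ∀ x ∈ G.allVars, x ∉ W → x ∈ keycl (q.get j) q := by
        rintro G hG ⟨w, hwG, hwW⟩ x hx hxW
        by_contra hc
        exact hxW (attacksVar_snoc hwW hG hwG hx hc)
      have hWlate : ∀ i : Fin q.length, (∃ v ∈ (q.get i).allVars, v ∈ W) →
          i ≠ j → (j : ℕ) < (i : ℕ) := by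
        rintro i ⟨v, hvi, hvW⟩ hij
        have hne : q.get j ≠ q.get i := by
          intro he
          exact hij (rel_get_inj hsjf (congrArg DBAtom.rel he.symm))
        exact htopo j i hne ⟨v, hvi, hvW⟩
      -- W only contains tail variables.
      have hWtail : ∀ v ∈ W, v ∈ qVars (q.drop k) := by
        intro v hvW
        obtain ⟨G, hGq, hvG⟩ := attacksVar_mem_atom hF₀q hvW
        obtain ⟨i, hiG⟩ := List.get_of_mem hGq
        subst hiG
        have hki : k ≤ (i : ℕ) := by
          by_cases hij : i = j
          · subst hij; exact hkj
          · have := hWlate i ⟨v, hvG, hvW⟩ hij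
            omega
        exact mem_qVars.mpr ⟨q.get i, get_mem_drop i hki, hvG⟩
      -- W is disjoint from S.
      have hSW : ∀ v ∈ S, v ∉ W := by
        rintro v (hvS | hvS) hvW
        · obtain ⟨G, hGt, hvG⟩ := mem_qVars.mp (by exact_mod_cast hvS : v ∈ uVars q k)
          obtain ⟨i, hik, hiG⟩ := mem_take_iff.mp hGt
          subst hiG
          have hij : i ≠ j := by
            intro he
            rw [he] at hik
            omega
          have := hWlate i ⟨v, hvG, hvW⟩ hij
          omega
        · have hvk : v ∈ (q.get ⟨k, hk⟩).keyVars := by exact_mod_cast hvS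
          by_cases hkj' : (⟨k, hk⟩ : Fin q.length) = j
          · rw [hkj'] at hvk
            exact hWkeycl v hvW (keyVars_subset_keycl hF₀q v hvk)
          · have := hWlate ⟨k, hk⟩ ⟨v, keyVars_subset_allVars _ hvk, hvW⟩ hkj'
            simp only at this
            omega
      -- The surgery assignment.
      set κ' : Assignment := fun v => if v ∈ W then μ v else κ v with hκ'def
      apply hnot
      rw [entails_iff]
      refine ⟨κ', ?_, ?_, ?_⟩
      · -- domain
        ext v
        by_cases hvW : v ∈ W
        · have hμs : (μ v).isSome := isSome_of_Dom_eq hμD (by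
            rw [← uVars_union_drop q k]
            exact Finset.mem_union_right _ (hWtail v hvW))
          have hv' : κ' v = μ v := by simp only [hκ'def, hvW, if_true]
          constructor
          · intro _
            exact Set.mem_union_right _ (by exact_mod_cast hWtail v hvW)
          · intro _
            show κ' v ≠ none
            rw [hv']
            exact Option.isSome_iff_ne_none.mp hμs
        · have hv' : κ' v = κ v := by simp only [hκ'def, hvW, if_false]
          have h1 : v ∈ κ'.Dom ↔ v ∈ κ.Dom := by
            simp [Assignment.Dom, hv']
          rw [h1, hκD]
      · -- extends
        intro v c hc
        have hvS : v ∈ S := by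
          by_contra hvS
          rw [restrict_apply_of_not_mem hvS] at hc
          cases hc
        have : κ' v = κ v := by simp only [hκ'def, hSW v hvS, if_false]
        rw [this]
        exact hκE v c hc
      · -- facts
        intro F hF
        obtain ⟨i, hik, hiF⟩ := mem_drop_iff.mp hF
        subst hiF
        by_cases hij : i = j
        · subst hij
          have hagree : ∀ v ∈ (q.get i).allVars, (κ' v).getD 0 = (μ v).getD 0 := by
            intro v hv
            by_cases hvW : v ∈ W
            · simp only [hκ'def, hvW, if_true]
            · have : κ' v = κ v := by simp only [hκ'def, hvW, if_false]
              rw [this]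
              exact hforce v (hWout v hv hvW)
          rw [groundFact_congr hagree]
          exact hht
        · by_cases hW : ∃ w ∈ (q.get i).allVars, w ∈ W
          · have hagree : ∀ v ∈ (q.get i).allVars, (κ' v).getD 0 = (μ v).getD 0 := by
              intro v hv
              by_cases hvW : v ∈ W
              · simp only [hκ'def, hvW, if_true]
              · have : κ' v = κ v := by simp only [hκ'def, hvW, if_false]
                rw [this]
                exact hforce v (hWprop (q.get i) (by exact List.get_mem q i) hW v hv hvW)
            rw [groundFact_congr hagree]
            exact hμall i hij
          · push_neg at hW
            have hagree : ∀ v ∈ (q.get i).allVars, (κ' v).getD 0 = (κ v).getD 0 := by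
              intro v hv
              have : κ' v = κ v := by simp only [hκ'def, hW v hv, if_false]
              rw [this]
            rw [groundFact_congr hagree]
            exact hκall i hij


end SFAux

end Master

section Assembly

namespace SFAux

lemma emptyAssignment_Dom : (emptyAssignment).Dom = ∅ := by
  ext v; simp [Assignment.Dom, emptyAssignment]

lemma entails_empty_of {s : Finset DBFact} {ψ : Assignment} {p : List DBAtom}
    (h : Entails s ψ p) (hψ : ψ.Dom ⊆ ↑(qVars p)) : Entails s emptyAssignment p := by
  rw [entails_iff] at h ⊢
  obtain ⟨κ, hκD, hκE, hκF⟩ := h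
  refine ⟨κ, ?_, ?_, hκF⟩
  · rw [hκD, emptyAssignment_Dom, Set.union_eq_self_of_subset_left hψ, Set.empty_union]
  · intro v c hc
    simp [emptyAssignment] at hc

lemma entails_db_restrict {q : List DBAtom} {db r : Finset DBFact} (hrdb : r ⊆ db)
    {θ : Assignment} (hemb : IsEmbedding q r θ) (S : Set Var) (hS : S ⊆ θ.Dom) :
    Entails db (θ.restrict S) q := by
  refine entails_of_restrict hS (by rw [hemb.1]) (fun F hF => ?_)
  exact hrdb ((isEmbedding_iff.mp hemb).2 F hF)

/-- Direction (ii): every n-minimal repair is superfrugal. -/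
lemma nminimal_superfrugal {q : List DBAtom} (hsjf : SelfJoinFree q) (htopo : IsTopoSort q)
    {db r : Finset DBFact} (hrmin : NMinimal q db r) : Superfrugal q db r := by
  have hr : IsRepair db r := hrmin.1
  refine ⟨hr, fun θ hemb => ?_⟩
  have hDom : θ.Dom = ↑(qVars q) := hemb.1
  -- the level-0 certainty condition
  have hC0 : ∀ t, IsRepair db t → Entails t emptyAssignment q := by
    intro t ht
    rcases Nat.eq_zero_or_pos q.length with hq0 | hqpos
    · have hq : q = [] := List.length_eq_zero_iff.mp hq0
      subst hq
      rw [entails_iff]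
      exact ⟨emptyAssignment, by
        rw [emptyAssignment_Dom]
        simp [qVars_nil], fun v c hc => hc, fun F hF => absurd hF (List.not_mem_nil)⟩
    · have hm := master hsjf htopo hrmin hemb 0 hqpos t ht
      rw [List.drop_zero] at hm
      refine entails_empty_of hm ?_
      rw [Dom_restrict]
      refine (Set.inter_subset_left).trans ?_
      rintro v (hv | hv)
      · exact_mod_cast uVars_subset_qVars q 0 (by exact_mod_cast hv)
      · exact_mod_cast allVars_subset_qVars (by exact List.get_mem q ⟨0, hqpos⟩)
          (keyVars_subset_allVars _ (by exact_mod_cast hv))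
  -- main recursion
  have hrec : ∀ m, m ≤ q.length → IsForallEmb q db m (θ.restrict ↑(uVars q m)) := by
    intro m
    induction m with
    | zero =>
        intro _
        refine ⟨⟨?_, ?_⟩, hC0⟩
        · rw [Dom_restrict, hDom]
          exact Set.inter_eq_left.mpr (by exact_mod_cast uVars_subset_qVars q 0)
        · exact entails_db_restrict hr.1 hemb _ (by
            rw [hDom]; exact_mod_cast uVars_subset_qVars q 0)
    | succ m ih =>
        intro hm1
        have hm : m < q.length := hm1
        have hkey_sub : (headKey (q.drop m) : Finset Var) ⊆ uVars q (m + 1) := by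
          rw [headKey_drop hm, uVars_succ hm]
          exact (keyVars_subset_allVars _).trans Finset.subset_union_right
        have hu_sub : uVars q m ⊆ uVars q (m + 1) := uVars_mono (Nat.le_succ m)
        refine ⟨⟨?_, ?_⟩, ?_, ?_⟩
        · rw [Dom_restrict, hDom]
          exact Set.inter_eq_left.mpr (by exact_mod_cast uVars_subset_qVars q (m + 1))
        · exact entails_db_restrict hr.1 hemb _ (by
            rw [hDom]; exact_mod_cast uVars_subset_qVars q (m + 1))
        · intro t ht
          rw [restrict_restrict]
          have hset : (↑(uVars q m) ∪ ↑(headKey (q.drop m))) ∩ ↑(uVars q (m + 1)) =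
              (↑(uVars q m) ∪ ↑(headKey (q.drop m)) : Set Var) := by
            refine Set.inter_eq_left.mpr ?_
            rintro v (hv | hv)
            · exact_mod_cast hu_sub (by exact_mod_cast hv)
            · exact_mod_cast hkey_sub (by exact_mod_cast hv)
          rw [hset, headKey_drop hm]
          exact master hsjf htopo hrmin hemb m hm t ht
        · rw [restrict_restrict]
          have hset : (↑(uVars q m) : Set Var) ∩ ↑(uVars q (m + 1)) = ↑(uVars q m) :=
            Set.inter_eq_left.mpr (by exact_mod_cast hu_sub)
          rw [hset]
          exact ih (Nat.le_of_succ_le hm1)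
  have := hrec q.length le_rfl
  have hfull : θ.restrict ↑(uVars q q.length) = θ := by
    refine restrict_eq_self ?_
    rw [hDom, uVars_full (le_refl q.length)]
  rwa [hfull] at this

end SFAux

end Assembly

section DirectionOne

namespace SFAux

lemma headKey_subset_qVars (p : List DBAtom) : headKey p ⊆ qVars p := by
  cases p with
  | nil => simp [headKey]
  | cons F l =>
      intro v hv
      exact allVars_subset_qVars (List.mem_cons_self)
        (keyVars_subset_allVars _ (by exact hv))

/-- Extracting the level conditions from a ∀embedding. -/
lemma forallEmb_conditions {q : List DBAtom} {db : Finset DBFact} {μ : Assignment}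
    (hμD : μ.Dom = ↑(qVars q)) :
    ∀ m, m ≤ q.length → IsForallEmb q db m (μ.restrict ↑(uVars q m)) →
      ∀ j, j < m → ∀ t, IsRepair db t →
        Entails t (μ.restrict (↑(uVars q j) ∪ ↑(headKey (q.drop j)))) (q.drop j) := by
  intro m
  induction m with
  | zero => intro _ _ j hj; omega
  | succ m ih =>
      intro hm1 hfa j hj t ht
      have hm : m < q.length := hm1
      have hkey_sub : (headKey (q.drop m) : Finset Var) ⊆ uVars q (m + 1) := by
        rw [headKey_drop hm, uVars_succ hm]
        exact (keyVars_subset_allVars _).trans Finset.subset_union_right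
      have hu_sub : uVars q m ⊆ uVars q (m + 1) := uVars_mono (Nat.le_succ m)
      obtain ⟨-, hcond, hrec⟩ := hfa
      rw [restrict_restrict] at hcond hrec
      have hset : (↑(uVars q m) ∪ ↑(headKey (q.drop m))) ∩ ↑(uVars q (m + 1)) =
          (↑(uVars q m) ∪ ↑(headKey (q.drop m)) : Set Var) := by
        refine Set.inter_eq_left.mpr ?_
        rintro v (hv | hv)
        · exact_mod_cast hu_sub (by exact_mod_cast hv)
        · exact_mod_cast hkey_sub (by exact_mod_cast hv)
      rw [hset] at hcond
      have hset2 : (↑(uVars q m) : Set Var) ∩ ↑(uVars q (m + 1)) = ↑(uVars q m) :=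
        Set.inter_eq_left.mpr (by exact_mod_cast hu_sub)
      rw [hset2] at hrec
      rcases Nat.lt_or_ge j m with hjm | hjm
      · exact ih (Nat.le_of_lt hm1) hrec j hjm t ht
      · have hjm' : j = m := by omega
        subst hjm'
        exact hcond t ht

/-- Direction (i): every superfrugal repair is n-minimal. -/
lemma superfrugal_nminimal {q : List DBAtom} {db r : Finset DBFact}
    (hsf : Superfrugal q db r) : NMinimal q db r := by
  refine ⟨hsf.1, ?_⟩
  rintro ⟨s, hs, hsub, μ, hμr, hμs⟩
  have hμD : μ.Dom = ↑(qVars q) := hμr.1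
  have hμfacts : ∀ F ∈ q, groundFact μ F ∈ r := (isEmbedding_iff.mp hμr).2
  have hfa : IsForallEmb q db q.length μ := hsf.2 μ hμr
  have hfull : μ.restrict ↑(uVars q q.length) = μ := by
    refine restrict_eq_self ?_
    rw [hμD, uVars_full (le_refl q.length)]
  have hcond := forallEmb_conditions hμD q.length le_rfl (by rwa [hfull])
  -- build embeddings of s agreeing with μ on larger and larger prefixes
  have hbuild : ∀ j, j ≤ q.length → ∃ ν, IsEmbedding q s ν ∧ ∀ v ∈ uVars q j, ν v = μ v := by
    intro j
    induction j with
    | zero =>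
        intro _
        rcases Nat.eq_zero_or_pos q.length with hq0 | hqpos
        · -- empty query : μ itself embeds into s
          have hq : q = [] := List.length_eq_zero_iff.mp hq0
          refine ⟨μ, ⟨hμD, fun F hF => ?_⟩, fun v _ => rfl⟩
          rw [hq] at hF
          exact absurd hF (List.not_mem_nil)
        · have h0 := hcond 0 hqpos s hs
          rw [entails_iff] at h0
          obtain ⟨κ, hκD, hκE, hκF⟩ := h0
          rw [List.drop_zero] at hκD hκF
          refine ⟨κ, isEmbedding_iff.mpr ⟨?_, hκF⟩, fun v hv => ?_⟩
          · rw [hκD, Dom_restrict, hμD]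
            refine Set.union_eq_self_of_subset_left ?_
            refine (Set.inter_subset_left).trans ?_
            rintro v (hv | hv)
            · exact_mod_cast uVars_subset_qVars q 0 (by exact_mod_cast hv)
            · refine ?_
              have : v ∈ qVars (q.drop 0) := headKey_subset_qVars _ (by exact_mod_cast hv)
              rw [List.drop_zero] at this
              exact_mod_cast this
          · rw [uVars_zero] at hv
            exact absurd hv (Finset.notMem_empty v)
    | succ j ihj =>
        intro hj1
        have hj : j < q.length := hj1
        obtain ⟨ν, hν, hag⟩ := ihj (Nat.le_of_succ_le hj1)
        have hνD : ν.Dom = ↑(qVars q) := hν.1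
        have hνfacts : ∀ F ∈ q, groundFact ν F ∈ s := (isEmbedding_iff.mp hν).2
        have hc := hcond j hj s hs
        rw [entails_iff] at hc
        obtain ⟨κ, hκD, hκE, hκF⟩ := hc
        rw [headKey_drop hj] at hκD hκE
        -- κ agrees with μ on uVars q j ∪ keyVars (q.get j)
        have hκag : ∀ v, v ∈ uVars q j ∨ v ∈ (q.get ⟨j, hj⟩).keyVars → κ v = μ v := by
          intro v hv
          have hvq : v ∈ qVars q := by
            rcases hv with hv | hv
            · exact uVars_subset_qVars q j hv
            · exact allVars_subset_qVars (by exact List.get_mem q ⟨j, hj⟩)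
                (keyVars_subset_allVars _ hv)
          obtain ⟨c, hc⟩ := Option.isSome_iff_exists.mp (isSome_of_Dom_eq hμD hvq)
          have hπ : μ.restrict (↑(uVars q j) ∪ ↑((q.get ⟨j, hj⟩).keyVars)) v = some c := by
            rw [restrict_apply_of_mem, hc]
            rcases hv with hv | hv
            · exact Or.inl (by exact_mod_cast hv)
            · exact Or.inr (by exact_mod_cast hv)
          rw [hκE v c hπ, hc]
        -- the combined assignment
        set ρ : Assignment := fun v => if v ∈ uVars q j then ν v else κ v with hρdef
        have hρag : ∀ v, v ∈ uVars q j ∨ v ∈ (q.get ⟨j, hj⟩).keyVars → ρ v = μ v := by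
          intro v hv
          by_cases hvu : v ∈ uVars q j
          · simp only [hρdef, hvu, if_true]
            exact hag v hvu
          · simp only [hρdef, hvu, if_false]
            exact hκag v hv
        have hρD : ρ.Dom = ↑(qVars q) := by
          ext v
          by_cases hvu : v ∈ uVars q j
          · have : ρ v = ν v := by simp only [hρdef, hvu, if_true]
            simp only [Assignment.Dom, Set.mem_setOf_eq, this]
            have h1 : v ∈ ν.Dom ↔ ν v ≠ none := Iff.rfl
            rw [← h1, hνD]
          · have : ρ v = κ v := by simp only [hρdef, hvu, if_false]
            simp only [Assignment.Dom, Set.mem_setOf_eq, this]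
            have h1 : v ∈ κ.Dom ↔ κ v ≠ none := Iff.rfl
            rw [← h1, hκD]
            constructor
            · rintro (hv | hv)
              · rw [Dom_restrict, hμD] at hv
                exact hv.2
              · have : v ∈ qVars q := by
                  rw [← uVars_union_drop q j]
                  exact Finset.mem_union_right _ (by exact_mod_cast hv)
                exact_mod_cast this
            · intro hv
              refine Or.inr ?_
              have hvq : v ∈ qVars q := by exact_mod_cast hv
              rw [← uVars_union_drop q j] at hvq
              rcases Finset.mem_union.mp hvq with h | h
              · exact absurd h hvu
              · exact_mod_cast h
        -- ρ is an embedding of q in s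
        have hρemb : IsEmbedding q s ρ := by
          refine isEmbedding_iff.mpr ⟨hρD, fun F hFq => ?_⟩
          obtain ⟨i, hiF⟩ := List.get_of_mem hFq
          subst hiF
          by_cases hik : (i : ℕ) < j
          · have : groundFact ρ (q.get i) = groundFact ν (q.get i) := by
              refine groundFact_congr (fun v hv => ?_)
              have hvu : v ∈ uVars q j :=
                mem_qVars.mpr ⟨q.get i, mem_take_iff.mpr ⟨i, hik, rfl⟩, hv⟩
              simp only [hρdef, hvu, if_true]
            rw [this]
            exact hνfacts _ hFq
          · have : groundFact ρ (q.get i) = groundFact κ (q.get i) := by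
              refine groundFact_congr (fun v hv => ?_)
              by_cases hvu : v ∈ uVars q j
              · have h1 : ρ v = μ v := hρag v (Or.inl hvu)
                have h2 : κ v = μ v := hκag v (Or.inl hvu)
                rw [h1, h2]
              · simp only [hρdef, hvu, if_false]
            rw [this]
            exact hκF _ (get_mem_drop i (le_of_not_gt hik))
        -- ρ agrees with μ on all variables of q.get j
        have hρj : ∀ v ∈ (q.get ⟨j, hj⟩).allVars, ρ v = μ v := by
          have hρr : IsEmbedding q r ρ := hsub ρ hρemb
          have h1 : groundFact ρ (q.get ⟨j, hj⟩) ∈ r :=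
            (isEmbedding_iff.mp hρr).2 _ (by exact List.get_mem q ⟨j, hj⟩)
          have h2 : groundFact μ (q.get ⟨j, hj⟩) ∈ r :=
            hμfacts _ (by exact List.get_mem q ⟨j, hj⟩)
          have hke : KeyEqual (groundFact ρ (q.get ⟨j, hj⟩)) (groundFact μ (q.get ⟨j, hj⟩)) :=
            keyEqual_groundFact (fun v hv => by rw [hρag v (Or.inr hv)])
          have heqf := hsf.1.2.1 _ h1 _ h2 hke
          intro v hv
          refine option_eq_of_getD ?_ ?_ (groundFact_eq_imp heqf v hv)
          · exact isSome_of_Dom_eq hρD (allVars_subset_qVars (by exact List.get_mem q ⟨j, hj⟩) hv)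
          · exact isSome_of_Dom_eq hμD (allVars_subset_qVars (by exact List.get_mem q ⟨j, hj⟩) hv)
        refine ⟨ρ, hρemb, fun v hv => ?_⟩
        rw [uVars_succ hj] at hv
        rcases Finset.mem_union.mp hv with hv | hv
        · exact hρag v (Or.inl hv)
        · exact hρj v hv
  obtain ⟨ν, hνs, hνag⟩ := hbuild q.length le_rfl
  have hνμ : ν = μ := by
    funext v
    by_cases hv : v ∈ qVars q
    · exact hνag v (by rwa [uVars_full (le_refl q.length)])
    · have h1 : ν v = none := by
        by_contra hne
        exact hv (by exact_mod_cast hνs.1 ▸ (show v ∈ ν.Dom from hne))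
      have h2 : μ v = none := by
        by_contra hne
        exact hv (by exact_mod_cast hμD ▸ (show v ∈ μ.Dom from hne))
      rw [h1, h2]
  exact hμs (hνμ ▸ hνs)

end SFAux

end DirectionOne

/-- Superfrugal repairs are exactly the n-minimal repairs. -/
theorem stmt6
    (q : List DBAtom) (hsjf : SelfJoinFree q) (htopo : IsTopoSort q)
    (db : Finset DBFact) :
    (∀ r : Finset DBFact, Superfrugal q db r → NMinimal q db r) ∧
    (∀ r : Finset DBFact, NMinimal q db r → Superfrugal q db r) := by
  constructor
  · intro r hsf
    exact SFAux.superfrugal_nminimal hsf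
  · intro r hmin
    exact SFAux.nminimal_superfrugal hsjf htopo hmin
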